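/- arXiv:2212.11609 — 2 statements merged into one kernel-verified Lean document; each statement's English description precedes it below -/
import Mathlib

section
/- For all real p, r with 0 ≤ p ≤ 4/21 and 0 ≤ r ≤ 2/7, the function g(p,r) = √3·(3-2p)·(3+r) / ((3-2r)·(√3 + √3·p)) satisfies g(p,r) ≤ 69/17. -/
theorem stmt1 (p r : ℝ) (hp0 : 0 ≤ p) (hp : p ≤ 4/21) (hr0 : 0 ≤ r) (hr : r ≤ 2/7) :
    Real.sqrt 3 * (3 - 2*p) * (3 + r) / ((3 - 2*r) * (Real.sqrt 3 + Real.sqrt 3 * p))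
      ≤ 69/17 := by
  have hs : (0:ℝ) < Real.sqrt 3 := Real.sqrt_pos.mpr (by norm_num)
  have h1 : Real.sqrt 3 + Real.sqrt 3 * p = Real.sqrt 3 * (1 + p) := by ring
  rw [h1]
  have key : Real.sqrt 3 * (3 - 2*p) * (3 + r) / ((3 - 2*r) * (Real.sqrt 3 * (1 + p)))
      = (3 - 2*p) * (3 + r) / ((3 - 2*r) * (1 + p)) := by
    have h2 : (3 - 2*r) ≠ 0 := by nlinarith
    have h3 : (1 + p) ≠ 0 := by nlinarith
    field_simp
  rw [key]
  rw [div_le_iff₀ (by nlinarith)]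
  nlinarith [mul_nonneg hp0 hr0]
end

section
/- For the regular pentagon P with vertices (cos(2πi/5), sin(2πi/5)), i = 1,…,5, the inscribed triangle T with one vertex (1,0) and opposite side on the line x = -1/2 satisfies: T ⊆ P ⊆ h(T), where h is the homothety with ratio (7-√5)/2 centered at the common centroid of P and T. Moreover the centroids of P and T coincide (both equal the origin). -/
set_option maxHeartbeats 1000000


open Real

noncomputable def pentVertex (i : ℕ) : ℝ × ℝ :=
  (Real.cos (2 * π * i / 5), Real.sin (2 * π * i / 5))

noncomputable def pentagonP : Set (ℝ × ℝ) :=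
  convexHull ℝ {pentVertex 1, pentVertex 2, pentVertex 3, pentVertex 4, pentVertex 5}

private lemma convex_half (n1 n2 m : ℝ) :
    Convex ℝ {p : ℝ × ℝ | n1 * p.1 + n2 * p.2 ≤ m} := by
  apply convex_halfSpace_le
  refine ⟨fun p q => ?_, fun c p => ?_⟩ <;> simp <;> ring

private lemma mem_frontier_of_support {P : Set (ℝ × ℝ)} (hP : IsClosed P)
    {n1 n2 m : ℝ} (hsub : P ⊆ {p : ℝ × ℝ | n1 * p.1 + n2 * p.2 ≤ m})
    {p : ℝ × ℝ} (hp : p ∈ P) (heq : n1 * p.1 + n2 * p.2 = m)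
    (hn : 0 < n1 ^ 2 + n2 ^ 2) : p ∈ frontier P := by
  rw [frontier, hP.closure_eq]
  refine ⟨hp, fun hint => ?_⟩
  rw [mem_interior_iff_mem_nhds, Metric.mem_nhds_iff] at hint
  obtain ⟨ε, hε, hball⟩ := hint
  have hden : (0:ℝ) < |n1| + |n2| + 1 := by positivity
  set δ := ε / (2 * (|n1| + |n2| + 1)) with hδ
  have hδpos : 0 < δ := by positivity
  have hhalf : δ * (|n1| + |n2| + 1) = ε / 2 := by
    rw [hδ]; field_simp
  have hq : ((p.1 + δ * n1, p.2 + δ * n2) : ℝ × ℝ) ∈ Metric.ball p ε := by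
    rw [Metric.mem_ball, Prod.dist_eq]
    have h1 : dist (p.1 + δ * n1) p.1 = δ * |n1| := by
      rw [Real.dist_eq, add_sub_cancel_left, abs_mul, abs_of_pos hδpos]
    have h2 : dist (p.2 + δ * n2) p.2 = δ * |n2| := by
      rw [Real.dist_eq, add_sub_cancel_left, abs_mul, abs_of_pos hδpos]
    rw [h1, h2]
    have hn1 : δ * |n1| < ε := by nlinarith [abs_nonneg n1, abs_nonneg n2]
    have hn2 : δ * |n2| < ε := by nlinarith [abs_nonneg n1, abs_nonneg n2]
    exact max_lt hn1 hn2
  have hle := hsub (hball hq)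
  simp only [Set.mem_setOf_eq] at hle
  nlinarith [mul_pos hδpos hn]

private lemma mem_hull3 {V1 V2 V3 p : ℝ × ℝ} {w1 w2 w3 : ℝ}
    (h1 : 0 ≤ w1) (h2 : 0 ≤ w2) (h3 : 0 ≤ w3) (hsum : w1 + w2 + w3 = 1)
    (hp : w1 • V1 + w2 • V2 + w3 • V3 = p) :
    p ∈ convexHull ℝ ({V1, V2, V3} : Set (ℝ × ℝ)) := by
  have h := Finset.centerMass_mem_convexHull (s := ({V1, V2, V3} : Set (ℝ × ℝ)))
      (Finset.univ : Finset (Fin 3))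
      (w := ![w1, w2, w3]) (z := ![V1, V2, V3])
      (by intro i _; fin_cases i <;> simpa)
      (by simp [Fin.sum_univ_three, hsum])
      (by intro i _; fin_cases i <;> simp)
  rw [Finset.centerMass] at h
  simp only [Fin.sum_univ_three, Matrix.cons_val_zero, Matrix.cons_val_one,
    Matrix.head_cons, Matrix.cons_val_two, Matrix.tail_cons, hsum, inv_one, one_smul] at h
  rw [← hp]
  exact h

theorem stmt15 :
    ∃ b : ℝ, 0 < b ∧ ((-1/2, b) : ℝ × ℝ) ∈ frontier pentagonP ∧
      ((-1/2, -b) : ℝ × ℝ) ∈ frontier pentagonP ∧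
      (convexHull ℝ {((1:ℝ), (0:ℝ)), (-1/2, b), (-1/2, -b)} ⊆ pentagonP ∧
       pentagonP ⊆
         AffineMap.homothety ((0, 0) : ℝ × ℝ) ((7 - Real.sqrt 5) / 2) ''
           convexHull ℝ {((1:ℝ), (0:ℝ)), (-1/2, b), (-1/2, -b)} ∧
       ((1/5 : ℝ) •
           (pentVertex 1 + pentVertex 2 + pentVertex 3 + pentVertex 4 + pentVertex 5)
         = ((0, 0) : ℝ × ℝ)) ∧
       ((1/3 : ℝ) • (((1, 0) : ℝ × ℝ) + (-1/2, b) + (-1/2, -b)) = ((0, 0) : ℝ × ℝ))) := by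
  have hr : Real.sqrt 5 ^ 2 = 5 := Real.sq_sqrt (by norm_num)
  set r := Real.sqrt 5 with hrdef
  have hr0 : 0 ≤ r := Real.sqrt_nonneg 5
  have hr2 : 2 < r := by nlinarith
  have hr3 : r < 3 := by nlinarith
  have hrpos : (0:ℝ) < r := by linarith
  have hs : 0 < Real.sin (π / 5) :=
    Real.sin_pos_of_pos_of_lt_pi (by positivity) (by linarith [pi_pos])
  set s := Real.sin (π / 5) with hsdef
  have hc : Real.cos (π / 5) = (1 + r) / 4 := Real.cos_pi_div_five
  have hrs : r ^ 2 * s = 5 * s := by rw [hr]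
  have hrspos : 0 < r * s := mul_pos hrpos hs
  -- pentagon vertex values
  have pv1 : pentVertex 1 = ((r - 1) / 4, s * (1 + r) / 2) := by
    simp only [pentVertex, Nat.cast_one]
    rw [show 2 * π * 1 / 5 = 2 * (π / 5) by ring, Real.cos_two_mul, Real.sin_two_mul,
      hc, ← hsdef]
    refine Prod.ext ?_ ?_
    · simp only; linear_combination (1/8 : ℝ) * hr
    · simp only; ring
  have pv2 : pentVertex 2 = (-(1 + r) / 4, s) := by
    simp only [pentVertex, Nat.cast_ofNat]
    rw [show 2 * π * 2 / 5 = π - π / 5 by ring, Real.cos_pi_sub, Real.sin_pi_sub,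
      hc, ← hsdef]
    refine Prod.ext ?_ ?_ <;> simp only <;> ring
  have pv3 : pentVertex 3 = (-(1 + r) / 4, -s) := by
    simp only [pentVertex, Nat.cast_ofNat]
    rw [show 2 * π * 3 / 5 = π + π / 5 by ring, Real.cos_add, Real.sin_add,
      Real.cos_pi, Real.sin_pi, hc, ← hsdef]
    refine Prod.ext ?_ ?_ <;> simp only <;> ring
  have pv4 : pentVertex 4 = ((r - 1) / 4, -(s * (1 + r) / 2)) := by
    simp only [pentVertex, Nat.cast_ofNat]
    rw [show 2 * π * 4 / 5 = 2 * π - 2 * (π / 5) by ring, Real.cos_sub, Real.sin_sub,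
      Real.cos_two_pi, Real.sin_two_pi, Real.cos_two_mul, Real.sin_two_mul, hc, ← hsdef]
    refine Prod.ext ?_ ?_
    · simp only; linear_combination (1/8 : ℝ) * hr
    · simp only; ring
  have pv5 : pentVertex 5 = (1, 0) := by
    simp only [pentVertex, Nat.cast_ofNat]
    rw [show 2 * π * 5 / 5 = 2 * π by ring, Real.cos_two_pi, Real.sin_two_pi]
  -- the base half-height
  set b := s * (5 + 3 * r) / 10 with hbdef
  have hb : 0 < b := by rw [hbdef]; nlinarith
  refine ⟨b, hb, ?_⟩
  have hPclosed : IsClosed pentagonP :=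
    (Set.Finite.isCompact_convexHull (𝕜 := ℝ) (Set.toFinite _)).isClosed
  have hA1P : pentVertex 1 ∈ pentagonP :=
    subset_convexHull ℝ _ (Set.mem_insert _ _)
  have hA2P : pentVertex 2 ∈ pentagonP :=
    subset_convexHull ℝ _ (Set.mem_insert_of_mem _ (Set.mem_insert _ _))
  have hA3P : pentVertex 3 ∈ pentagonP :=
    subset_convexHull ℝ _ (Set.mem_insert_of_mem _ (Set.mem_insert_of_mem _ (Set.mem_insert _ _)))
  have hA4P : pentVertex 4 ∈ pentagonP :=
    subset_convexHull ℝ _ (Set.mem_insert_of_mem _ (Set.mem_insert_of_mem _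
      (Set.mem_insert_of_mem _ (Set.mem_insert _ _))))
  have hA5P : pentVertex 5 ∈ pentagonP :=
    subset_convexHull ℝ _ (Set.mem_insert_of_mem _ (Set.mem_insert_of_mem _
      (Set.mem_insert_of_mem _ (Set.mem_insert_of_mem _ (Set.mem_singleton _)))))
  have hPconv : Convex ℝ pentagonP := convex_convexHull ℝ _
  -- (-1/2, b) and (-1/2, -b) lie in the pentagon
  have hu : (0:ℝ) ≤ (5 - r) / 10 := by linarith
  have hv : (0:ℝ) ≤ (5 + r) / 10 := by linarith
  have huv : (5 - r) / 10 + (5 + r) / 10 = 1 := by ring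
  have hptb : ((5 - r) / 10) • pentVertex 1 + ((5 + r) / 10) • pentVertex 2
      = ((-1/2 : ℝ), b) := by
    rw [pv1, pv2, Prod.smul_mk, Prod.smul_mk, Prod.mk_add_mk]
    refine Prod.ext ?_ ?_
    · simp only [smul_eq_mul]; linear_combination (-1/20 : ℝ) * hr
    · simp only [smul_eq_mul, hbdef]; linear_combination (-s/20 : ℝ) * hr
  have hptb' : ((5 + r) / 10) • pentVertex 3 + ((5 - r) / 10) • pentVertex 4
      = ((-1/2 : ℝ), -b) := by
    rw [pv3, pv4, Prod.smul_mk, Prod.smul_mk, Prod.mk_add_mk]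
    refine Prod.ext ?_ ?_
    · simp only [smul_eq_mul]; linear_combination (-1/20 : ℝ) * hr
    · simp only [smul_eq_mul, hbdef]; linear_combination (s/20 : ℝ) * hr
  have hbP : ((-1/2 : ℝ), b) ∈ pentagonP := by
    rw [← hptb]; exact hPconv hA1P hA2P hu hv huv
  have hbP' : ((-1/2 : ℝ), -b) ∈ pentagonP := by
    rw [← hptb']; exact hPconv hA3P hA4P hv hu (by ring)
  -- supporting halfplanes
  have hhalf1 : pentagonP ⊆
      {p : ℝ × ℝ | (-(s * (r - 1) / 2)) * p.1 + (r / 2) * p.2 ≤ s * (1 + r) / 2} := by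
    apply convexHull_min _ (convex_half _ _ _)
    intro p hp
    simp only [Set.mem_insert_iff, Set.mem_singleton_iff] at hp
    rcases hp with h | h | h | h | h <;> subst h <;>
      simp only [pv1, pv2, pv3, pv4, pv5, Set.mem_setOf_eq] <;> nlinarith [hrs, hrspos, hs]
  have hhalf2 : pentagonP ⊆
      {p : ℝ × ℝ | (-(s * (r - 1) / 2)) * p.1 + (-(r / 2)) * p.2 ≤ s * (1 + r) / 2} := by
    apply convexHull_min _ (convex_half _ _ _)
    intro p hp
    simp only [Set.mem_insert_iff, Set.mem_singleton_iff] at hp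
    rcases hp with h | h | h | h | h <;> subst h <;>
      simp only [pv1, pv2, pv3, pv4, pv5, Set.mem_setOf_eq] <;> nlinarith [hrs, hrspos, hs]
  have hn : (0:ℝ) < (-(s * (r - 1) / 2)) ^ 2 + (r / 2) ^ 2 := by nlinarith
  have hfront1 : ((-1/2 : ℝ), b) ∈ frontier pentagonP := by
    refine mem_frontier_of_support hPclosed hhalf1 hbP ?_ hn
    simp only [hbdef]; linear_combination (3 * s / 20 : ℝ) * hr
  have hfront2 : ((-1/2 : ℝ), -b) ∈ frontier pentagonP := by
    refine mem_frontier_of_support hPclosed hhalf2 hbP' ?_ (by nlinarith)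
    simp only [hbdef]; linear_combination (3 * s / 20 : ℝ) * hr
  refine ⟨hfront1, hfront2, ?_, ?_, ?_, ?_⟩
  · -- T ⊆ P
    apply convexHull_min _ hPconv
    intro p hp
    simp only [Set.mem_insert_iff, Set.mem_singleton_iff] at hp
    rcases hp with h | h | h <;> subst h
    · rw [← pv5]; exact hA5P
    · exact hbP
    · exact hbP'
  · -- P ⊆ h(T)
    rw [AffineMap.image_convexHull]
    have himg : AffineMap.homothety ((0, 0) : ℝ × ℝ) ((7 - r) / 2) ''
        ({((1:ℝ), (0:ℝ)), (-1/2, b), (-1/2, -b)} : Set (ℝ × ℝ))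
        = {(((7 - r) / 2 : ℝ), (0:ℝ)), (-(7 - r) / 4, ((7 - r) / 2) * b),
           (-(7 - r) / 4, -(((7 - r) / 2) * b))} := by
      rw [Set.image_insert_eq, Set.image_insert_eq, Set.image_singleton]
      congr 1
      · simp [AffineMap.homothety_apply, Prod.smul_mk]
      congr 1
      · simp only [AffineMap.homothety_apply]
        refine Prod.ext ?_ ?_ <;> simp <;> ring
      congr 1
      · simp only [AffineMap.homothety_apply]
        refine Prod.ext ?_ ?_ <;> simp <;> ring
    rw [himg]
    apply convexHull_min _ (convex_convexHull ℝ _)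
    intro p hp
    simp only [Set.mem_insert_iff, Set.mem_singleton_iff] at hp
    rcases hp with h | h | h | h | h <;> subst h
    · -- pentVertex 1
      refine mem_hull3 (w1 := (7 + r) / 22) (w2 := (15 - r) / 22) (w3 := 0)
        (by linarith) (by linarith) le_rfl (by ring) ?_
      rw [pv1, Prod.smul_mk, Prod.smul_mk, Prod.smul_mk, Prod.mk_add_mk, Prod.mk_add_mk]
      refine Prod.ext ?_ ?_ <;> simp only [smul_eq_mul, hbdef]
      · linear_combination (-3/88 : ℝ) * hr
      · linear_combination ((-61/440 : ℝ) * s + (3/440 : ℝ) * r * s) * hr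
    · -- pentVertex 2
      refine mem_hull3 (w1 := (8 - 2*r) / 33) (w2 := (5 + 7*r) / 33) (w3 := (20 - 5*r) / 33)
        (by linarith) (by linarith) (by linarith) (by ring) ?_
      rw [pv2, Prod.smul_mk, Prod.smul_mk, Prod.smul_mk, Prod.mk_add_mk, Prod.mk_add_mk]
      refine Prod.ext ?_ ?_ <;> simp only [smul_eq_mul, hbdef]
      · linear_combination (1/22 : ℝ) * hr
      · linear_combination ((79/220 : ℝ) * s - (3/55 : ℝ) * r * s) * hr
    · -- pentVertex 3
      refine mem_hull3 (w1 := (8 - 2*r) / 33) (w2 := (20 - 5*r) / 33) (w3 := (5 + 7*r) / 33)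
        (by linarith) (by linarith) (by linarith) (by ring) ?_
      rw [pv3, Prod.smul_mk, Prod.smul_mk, Prod.smul_mk, Prod.mk_add_mk, Prod.mk_add_mk]
      refine Prod.ext ?_ ?_ <;> simp only [smul_eq_mul, hbdef]
      · linear_combination (1/22 : ℝ) * hr
      · linear_combination ((-79/220 : ℝ) * s + (3/55 : ℝ) * r * s) * hr
    · -- pentVertex 4
      refine mem_hull3 (w1 := (7 + r) / 22) (w2 := 0) (w3 := (15 - r) / 22)
        (by linarith) le_rfl (by linarith) (by ring) ?_
      rw [pv4, Prod.smul_mk, Prod.smul_mk, Prod.smul_mk, Prod.mk_add_mk, Prod.mk_add_mk]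
      refine Prod.ext ?_ ?_ <;> simp only [smul_eq_mul, hbdef]
      · linear_combination (-3/88 : ℝ) * hr
      · linear_combination ((61/440 : ℝ) * s - (3/440 : ℝ) * r * s) * hr
    · -- pentVertex 5
      refine mem_hull3 (w1 := (18 + r) / 33) (w2 := (15 - r) / 66) (w3 := (15 - r) / 66)
        (by linarith) (by linarith) (by linarith) (by ring) ?_
      rw [pv5, Prod.smul_mk, Prod.smul_mk, Prod.smul_mk, Prod.mk_add_mk, Prod.mk_add_mk]
      refine Prod.ext ?_ ?_ <;> simp only [smul_eq_mul, hbdef]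
      · linear_combination (-1/44 : ℝ) * hr
      · ring
  · -- centroid of P
    rw [pv1, pv2, pv3, pv4, pv5]
    simp only [Prod.mk_add_mk, Prod.smul_mk, smul_eq_mul]
    refine Prod.ext ?_ ?_ <;> simp only <;> ring
  · -- centroid of T
    simp only [Prod.mk_add_mk, Prod.smul_mk, smul_eq_mul]
    refine Prod.ext ?_ ?_ <;> simp only <;> ring
end
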